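/- Let N = 2M with M odd, M > 1, and let r be coprime to N. Suppose g ∈ GL₂(ℤ/Nℤ) has det(g) = r and g² = ±r·I. Then, writing g = (g₂, g_M) under the isomorphism GL₂(ℤ/Nℤ) ≅ GL₂(ℤ/2ℤ) × GL₂(ℤ/Mℤ), either (i) g² = r·I and g_M is a scalar matrix, or (ii) g² = −r·I and g_M has trace zero. -/

import Mathlib

/-- Cayley–Hamilton for 2×2 matrices over a commutative ring. -/
lemma aux_sq_eq (R : Type*) [CommRing R] (A : Matrix (Fin 2) (Fin 2) R) :
    A * A = A.trace • A - A.det • (1 : Matrix (Fin 2) (Fin 2) R) := by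
  ext i j
  fin_cases i <;> fin_cases j <;>
    simp [Matrix.mul_apply, Fin.sum_univ_two, Matrix.trace_fin_two,
      Matrix.det_fin_two, Matrix.one_apply] <;> ring

/-- Let `N = 2M` with `M` odd, `M > 1`, and let `r` be coprime to `N`.  Suppose
`g ∈ GL₂(ℤ/Nℤ)` has `det g = r` and `g² = ±r·I`.  Then, writing `g_M` for the
reduction of `g` modulo `M` (the second component of `g` under
`GL₂(ℤ/Nℤ) ≅ GL₂(ℤ/2ℤ) × GL₂(ℤ/Mℤ)`), either (i) `g² = r·I` and `g_M` is a
scalar matrix, or (ii) `g² = −r·I` and `g_M` has trace zero. -/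
theorem stmt_16 (M : ℕ) (hModd : Odd M) (hM : 1 < M) (r : ℤ)
    (hr : Int.gcd r (2 * M) = 1)
    (g : Matrix (Fin 2) (Fin 2) (ZMod (2 * M)))
    (hunit : IsUnit g.det)
    (hdet : g.det = (r : ZMod (2 * M)))
    (hsq : g * g = (r : ZMod (2 * M)) • (1 : Matrix (Fin 2) (Fin 2) (ZMod (2 * M)))
      ∨ g * g = -((r : ZMod (2 * M)) • (1 : Matrix (Fin 2) (Fin 2) (ZMod (2 * M))))) :
    (g * g = (r : ZMod (2 * M)) • (1 : Matrix (Fin 2) (Fin 2) (ZMod (2 * M)))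
      ∧ ∃ lam : ZMod M,
          g.map (ZMod.castHom (dvd_mul_left M 2) (ZMod M))
            = lam • (1 : Matrix (Fin 2) (Fin 2) (ZMod M)))
    ∨ (g * g = -((r : ZMod (2 * M)) • (1 : Matrix (Fin 2) (Fin 2) (ZMod (2 * M))))
      ∧ (g.map (ZMod.castHom (dvd_mul_left M 2) (ZMod M))).trace = 0) := by
  have : NeZero M := ⟨by omega⟩
  set φ := ZMod.castHom (dvd_mul_left M 2) (ZMod M) with hφ
  set h := g.map φ with hh
  -- r is a unit mod M
  have hrM : IsUnit ((r : ZMod M)) := by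
    have h1 : IsCoprime r (2 * M : ℤ) := Int.isCoprime_iff_gcd_eq_one.mpr hr
    have h2 : IsCoprime r (M : ℤ) :=
      h1.of_isCoprime_of_dvd_right (by exact_mod_cast dvd_mul_left (M : ℤ) 2)
    obtain ⟨a, b, hab⟩ := h2
    refine IsUnit.of_mul_eq_one ((a : ZMod M)) ?_
    have := congrArg (fun x : ℤ => (x : ZMod M)) hab
    push_cast at this
    simpa [ZMod.natCast_self, mul_comm] using this
  -- 2 is a unit mod M
  have h2M : IsUnit ((2 : ZMod M)) := by
    have : IsUnit ((2 : ℕ) : ZMod M) := by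
      rw [ZMod.isUnit_iff_coprime]
      exact Nat.coprime_two_left.mpr hModd
    simpa using this
  -- basic facts about h
  have hdetM : h.det = (r : ZMod M) := by
    rw [hh, ← RingHom.mapMatrix_apply, ← RingHom.map_det, hdet]; simp
  have hhu : IsUnit h := by
    refine (Matrix.isUnit_iff_isUnit_det h).mpr ?_
    rw [hdetM]; exact hrM
  have hCH := aux_sq_eq (ZMod M) h
  rcases hsq with hs | hs
  · left
    refine ⟨hs, ?_⟩
    have hsqM : h * h = (r : ZMod M) • (1 : Matrix (Fin 2) (Fin 2) (ZMod M)) := by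
      rw [hh, ← Matrix.map_mul, hs]
      ext i j
      by_cases hij : i = j <;> simp [hij, Matrix.map_apply, Matrix.one_apply]
    have key : h.trace • h
        = ((2 : ZMod M) * r) • (1 : Matrix (Fin 2) (Fin 2) (ZMod M)) := by
      have h1 := hCH
      rw [hsqM, hdetM] at h1
      have h2 := sub_eq_iff_eq_add.mp h1.symm
      rw [h2, ← add_smul]
      congr 1; ring
    have htu : IsUnit h.trace := by
      have hdk : (h.trace • h).det = h.trace ^ 2 * h.det := by
        simp [Matrix.det_smul]
      have hu1 : IsUnit ((h.trace • h).det) := by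
        rw [key]
        simp only [Matrix.det_smul, Matrix.det_one, mul_one, Fintype.card_fin]
        exact (h2M.mul hrM).pow 2
      rw [hdk, hdetM] at hu1
      have h1 : IsUnit (h.trace ^ 2) := isUnit_of_mul_isUnit_left hu1
      rw [sq] at h1
      exact isUnit_of_mul_isUnit_left h1
    obtain ⟨u, hu⟩ := htu
    refine ⟨(↑u⁻¹ : ZMod M) * ((2 : ZMod M) * r), ?_⟩
    have h3 : (↑u⁻¹ : ZMod M) • (h.trace • h)
        = (↑u⁻¹ : ZMod M) • (((2 : ZMod M) * r) • (1 : Matrix (Fin 2) (Fin 2) (ZMod M))) := by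
      rw [key]
    rw [smul_smul, smul_smul, ← hu, Units.inv_mul] at h3
    simpa using h3
  · right
    refine ⟨hs, ?_⟩
    have hsqM : h * h = -((r : ZMod M) • (1 : Matrix (Fin 2) (Fin 2) (ZMod M))) := by
      rw [hh, ← Matrix.map_mul, hs]
      ext i j
      by_cases hij : i = j <;> simp [hij, Matrix.map_apply, Matrix.one_apply]
    have key : h.trace • h = 0 := by
      have h1 := hCH
      rw [hsqM, hdetM] at h1
      have h2 := sub_eq_iff_eq_add.mp h1.symm
      simpa using h2
    obtain ⟨u, hu⟩ := hhu
    have hinv : h * (↑u⁻¹ : Matrix (Fin 2) (Fin 2) (ZMod M)) = 1 := by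
      rw [← hu]; exact u.mul_inv
    have h2 : h.trace • (1 : Matrix (Fin 2) (Fin 2) (ZMod M)) = 0 := by
      calc h.trace • (1 : Matrix (Fin 2) (Fin 2) (ZMod M))
          = h.trace • (h * (↑u⁻¹ : Matrix (Fin 2) (Fin 2) (ZMod M))) := by rw [hinv]
        _ = (h.trace • h) * (↑u⁻¹ : Matrix (Fin 2) (Fin 2) (ZMod M)) :=
            (smul_mul_assoc _ _ _).symm
        _ = 0 := by rw [key, zero_mul]
    have h3 := congrFun (congrFun h2 0) 0
    simpa using h3
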